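/- Let R be a unital ring and X a set with a reduction system S on R⟨X⟩. The set of reduction-unique elements of R⟨X⟩ forms an R-subbimodule, and the map r_S assigning to each reduction-unique element its common image under all final sequences of reductions is an R-bimodule homomorphism into the module of irreducible elements. -/

import Mathlib

/-- The free (non-unital) `R`-ring `R⟨X⟩` on a set `X`: the free left `R`-module on the
free semigroup of nonempty words over `X`, with convolution multiplication. -/
abbrev BFree (R X : Type) [Ring R] : Type := MonoidAlgebra R (FreeSemigroup X)

variable {R X : Type} [Ring R]

/-- A rule `σ = (W_σ, f_σ)` of a reduction system: a word `W_σ` together with an element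
`f_σ` of `R⟨X⟩` all of whose coefficients are central in `R`. -/
structure BRule (R X : Type) [Ring R] : Type where
  W : FreeSemigroup X
  f : BFree R X
  central : ∀ w, f.coeff w ∈ Set.center R

/-- The word `A W B`, where `A` and `B` are possibly empty words. -/
def glue (A : List X) (W : FreeSemigroup X) (B : List X) : FreeSemigroup X :=
  match A with
  | [] => ⟨W.head, W.tail ++ B⟩
  | x :: A' => ⟨x, A' ++ (W.head :: W.tail) ++ B⟩

noncomputable def ofx (x : X) : BFree R X := MonoidAlgebra.single (FreeSemigroup.of x) 1

/-- Left multiplication by a possibly empty word. -/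
noncomputable def lmulW (A : List X) (a : BFree R X) : BFree R X :=
  A.foldr (fun x acc => ofx x * acc) a

/-- Right multiplication by a possibly empty word. -/
noncomputable def rmulW (a : BFree R X) (B : List X) : BFree R X :=
  B.foldl (fun acc x => acc * ofx x) a

open Classical in
/-- The reduction `r_{AσB}` : the `R`-bimodule endomorphism of `R⟨X⟩` sending the word
`A W_σ B` to `A f_σ B` and fixing all other words. -/
noncomputable def applyRed (σ : BRule R X) (A B : List X) (a : BFree R X) : BFree R X :=
  a.coeff.sum fun w c =>
    if w = glue A σ.W B then c • lmulW A (rmulW σ.f B) else MonoidAlgebra.single w c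

/-- The data of a single reduction: a rule and two (possibly empty) flanking words. -/
abbrev BStep (R X : Type) [Ring R] : Type := BRule R X × List X × List X

noncomputable def applyStep (s : BStep R X) (a : BFree R X) : BFree R X :=
  applyRed s.1 s.2.1 s.2.2 a

/-- The iterated application of an infinite sequence of reductions. -/
noncomputable def applySeq (seq : ℕ → BStep R X) (a : BFree R X) : ℕ → BFree R X
  | 0 => a
  | n + 1 => applyStep (seq n) (applySeq seq a n)

/-- The reduction `r_{AσB}` acts trivially on `a` if the coefficient of `A W_σ B`
in `a` is zero. -/
def ActsTrivially (s : BStep R X) (a : BFree R X) : Prop :=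
  a.coeff (glue s.2.1 s.1.W s.2.2) = 0

/-- `a` is reduction-finite under the reduction system `S` if for every infinite sequence
of reductions from `S`, all but finitely many act trivially along the orbit of `a`. -/
def ReductionFinite (S : Set (BRule R X)) (a : BFree R X) : Prop :=
  ∀ seq : ℕ → BStep R X, (∀ n, (seq n).1 ∈ S) →
    ∃ N, ∀ n ≥ N, ActsTrivially (seq n) (applySeq seq a n)

/-- `a` is irreducible under `S` if it involves no word of the form `A W_σ B`. -/
def BIrreducible (S : Set (BRule R X)) (a : BFree R X) : Prop :=
  ∀ σ ∈ S, ∀ A B : List X, a.coeff (glue A σ.W B) = 0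

/-- The result of applying a finite sequence of reductions. -/
noncomputable def applyList (L : List (BStep R X)) (a : BFree R X) : BFree R X :=
  L.foldl (fun b s => applyStep s b) a

/-- A finite sequence of reductions from `S` is final on `a` if applying it to `a`
yields an irreducible element. -/
def FinalOn (S : Set (BRule R X)) (L : List (BStep R X)) (a : BFree R X) : Prop :=
  (∀ s ∈ L, s.1 ∈ S) ∧ BIrreducible S (applyList L a)

/-- `a` is reduction-unique if it is reduction-finite and its images under all final
sequences of reductions coincide. -/
def ReductionUnique (S : Set (BRule R X)) (a : BFree R X) : Prop :=
  ReductionFinite S a ∧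
    ∀ L L' : List (BStep R X), FinalOn S L a → FinalOn S L' a →
      applyList L a = applyList L' a

open MulOpposite Classical

section helpers
variable {R X : Type} [Ring R]

lemma mul_apply_central (b c : BFree R X) (hb : ∀ w r, r * b.coeff w = b.coeff w * r)
    (hc : ∀ w r, r * c.coeff w = c.coeff w * r) : ∀ w r, r * (b * c).coeff w = (b * c).coeff w * r := by
  intro w r
  rw [MonoidAlgebra.coeff_mul]
  simp only [Finsupp.sum, Finset.mul_sum, Finset.sum_mul]
  refine Finset.sum_congr rfl fun x _ => ?_
  refine Finset.sum_congr rfl fun y _ => ?_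
  split
  · rw [← mul_assoc, hb x r, mul_assoc, hc y r, ← mul_assoc]
  · simp

end helpers

section helpers2
variable {R X : Type} [Ring R]

lemma ofx_central (x : X) : ∀ (w : FreeSemigroup X) (r : R), r * (ofx x : BFree R X).coeff w = (ofx x : BFree R X).coeff w * r := by
  intro w r
  simp only [ofx, MonoidAlgebra.coeff_single, Finsupp.single_apply]
  split <;> simp

lemma rmulW_central (b : BFree R X) (hb : ∀ w r, r * b.coeff w = b.coeff w * r) (B : List X) :
    ∀ w r, r * (rmulW b B).coeff w = (rmulW b B).coeff w * r := by
  induction B generalizing b with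
  | nil => exact hb
  | cons x B ih =>
      exact ih _ (mul_apply_central _ _ hb (ofx_central x))

lemma lmulW_central (A : List X) (b : BFree R X) (hb : ∀ w r, r * b.coeff w = b.coeff w * r) :
    ∀ w r, r * (lmulW A b).coeff w = (lmulW A b).coeff w * r := by
  induction A with
  | nil => exact hb
  | cons x A ih =>
      exact mul_apply_central _ _ (ofx_central x) ih

lemma target_central (σ : BRule R X) (A B : List X) :
    ∀ w r, r * (lmulW A (rmulW σ.f B)).coeff w = (lmulW A (rmulW σ.f B)).coeff w * r := by
  refine lmulW_central _ _ (rmulW_central _ ?_ _)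
  intro w r
  have := σ.central w
  rw [Semigroup.mem_center_iff] at this
  exact this r

end helpers2

section helpers3
variable {R X : Type} [Ring R]

lemma applyStep_zero (s : BStep R X) : applyStep s (0 : BFree R X) = 0 := by
  simp [applyStep, applyRed, Finsupp.sum_zero_index]

lemma applyStep_add (s : BStep R X) (a b : BFree R X) :
    applyStep s (a + b) = applyStep s a + applyStep s b := by
  unfold applyStep applyRed
  rw [MonoidAlgebra.coeff_add]
  apply Finsupp.sum_add_index' <;> intro w
  · split <;> simp
  · intro c₁ c₂; split <;> simp [add_smul, MonoidAlgebra.single_add]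

lemma applyStep_smul (s : BStep R X) (r : R) (a : BFree R X) :
    applyStep s (r • a) = r • applyStep s a := by
  unfold applyStep applyRed
  rw [MonoidAlgebra.coeff_smul, Finsupp.sum_smul_index, Finsupp.smul_sum]
  · refine Finsupp.sum_congr fun w _ => ?_
    split <;> simp [mul_smul, MonoidAlgebra.smul_single]
  · intro w; split <;> simp

lemma applyStep_opsmul (s : BStep R X) (r : R) (a : BFree R X) :
    applyStep s (MulOpposite.op r • a) = MulOpposite.op r • applyStep s a := by
  unfold applyStep applyRed
  rw [MonoidAlgebra.coeff_smul, Finsupp.sum_smul_index', Finsupp.smul_sum]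
  · refine Finsupp.sum_congr fun w _ => ?_
    split
    · ext u
      show a.coeff w * r * (lmulW s.2.1 (rmulW s.1.f s.2.2)).coeff u
        = a.coeff w * (lmulW s.2.1 (rmulW s.1.f s.2.2)).coeff u * r
      rw [mul_assoc, target_central s.1 s.2.1 s.2.2 u r, ← mul_assoc]
    · ext u
      show Finsupp.single w (a.coeff w * r) u = Finsupp.single w (a.coeff w) u * r
      simp only [Finsupp.single_apply]
      split <;> simp
  · intro w; split <;> simp

lemma applyStep_of_trivial (s : BStep R X) (a : BFree R X)
    (h : ActsTrivially s a) : applyStep s a = a := by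
  unfold applyStep applyRed
  have : ∀ w ∈ a.coeff.support, (if w = glue s.2.1 s.1.W s.2.2 then (a.coeff w) • lmulW s.2.1 (rmulW s.1.f s.2.2) else MonoidAlgebra.single w (a.coeff w)) = MonoidAlgebra.single w (a.coeff w) := by
    intro w hw
    rw [if_neg]
    rintro rfl
    exact (Finsupp.mem_support_iff.mp hw) h
  rw [Finsupp.sum_congr this]
  exact a.sum_coeff_single

end helpers3

section helpers4
variable {R X : Type} [Ring R]

lemma applyList_zero (L : List (BStep R X)) : applyList L (0 : BFree R X) = 0 := by
  induction L with
  | nil => rfl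
  | cons s L ih => show applyList L (applyStep s 0) = 0; rw [applyStep_zero]; exact ih

lemma applyList_cons (s : BStep R X) (L : List (BStep R X)) (a : BFree R X) :
    applyList (s :: L) a = applyList L (applyStep s a) := rfl

lemma applyList_add (L : List (BStep R X)) (a b : BFree R X) :
    applyList L (a + b) = applyList L a + applyList L b := by
  induction L generalizing a b with
  | nil => rfl
  | cons s L ih => rw [applyList_cons, applyStep_add, ih]; rfl

lemma applyList_smul (L : List (BStep R X)) (r : R) (a : BFree R X) :
    applyList L (r • a) = r • applyList L a := by
  induction L generalizing a with
  | nil => rfl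
  | cons s L ih => rw [applyList_cons, applyStep_smul, ih]; rfl

lemma applyList_opsmul (L : List (BStep R X)) (r : R) (a : BFree R X) :
    applyList L (MulOpposite.op r • a) = MulOpposite.op r • applyList L a := by
  induction L generalizing a with
  | nil => rfl
  | cons s L ih => rw [applyList_cons, applyStep_opsmul, ih]; rfl

lemma applyList_append (L L' : List (BStep R X)) (a : BFree R X) :
    applyList (L ++ L') a = applyList L' (applyList L a) := by
  simp [applyList, List.foldl_append]

lemma applySeq_add (seq : ℕ → BStep R X) (a b : BFree R X) (n : ℕ) :
    applySeq seq (a + b) n = applySeq seq a n + applySeq seq b n := by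
  induction n with
  | zero => rfl
  | succ n ih => show applyStep _ _ = _; rw [ih, applyStep_add]; rfl

lemma applySeq_smul (seq : ℕ → BStep R X) (r : R) (a : BFree R X) (n : ℕ) :
    applySeq seq (r • a) n = r • applySeq seq a n := by
  induction n with
  | zero => rfl
  | succ n ih => show applyStep _ _ = _; rw [ih, applyStep_smul]; rfl

lemma applySeq_opsmul (seq : ℕ → BStep R X) (r : R) (a : BFree R X) (n : ℕ) :
    applySeq seq (MulOpposite.op r • a) n = MulOpposite.op r • applySeq seq a n := by
  induction n with
  | zero => rfl
  | succ n ih => show applyStep _ _ = _; rw [ih, applyStep_opsmul]; rfl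

lemma applyStep_of_irreducible {S : Set (BRule R X)} {a : BFree R X}
    (ha : BIrreducible S a) {s : BStep R X} (hs : s.1 ∈ S) : applyStep s a = a :=
  applyStep_of_trivial s a (ha s.1 hs s.2.1 s.2.2)

lemma applyList_of_irreducible {S : Set (BRule R X)} {a : BFree R X}
    (ha : BIrreducible S a) {L : List (BStep R X)} (hL : ∀ s ∈ L, s.1 ∈ S) :
    applyList L a = a := by
  induction L with
  | nil => rfl
  | cons s L ih =>
      rw [applyList_cons, applyStep_of_irreducible ha (hL s (by simp))]
      exact ih fun t ht => hL t (by simp [ht])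

lemma reductionFinite_zero (S : Set (BRule R X)) : ReductionFinite S (0 : BFree R X) := by
  intro seq hseq
  have h0 : ∀ n, applySeq seq (0 : BFree R X) n = 0 := by
    intro n
    induction n with
    | zero => rfl
    | succ n ih => show applyStep _ _ = _; rw [ih, applyStep_zero]
  refine ⟨0, fun n _ => ?_⟩
  rw [ActsTrivially, h0]; rfl

lemma reductionFinite_add {S : Set (BRule R X)} {a b : BFree R X}
    (ha : ReductionFinite S a) (hb : ReductionFinite S b) : ReductionFinite S (a + b) := by
  intro seq hseq
  obtain ⟨Na, hNa⟩ := ha seq hseq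
  obtain ⟨Nb, hNb⟩ := hb seq hseq
  refine ⟨max Na Nb, fun n hn => ?_⟩
  have h1 := hNa n (le_trans (le_max_left _ _) hn)
  have h2 := hNb n (le_trans (le_max_right _ _) hn)
  rw [ActsTrivially, applySeq_add]
  show (applySeq seq a n).coeff _ + (applySeq seq b n).coeff _ = 0
  rw [h1, h2, add_zero]

lemma reductionFinite_smul {S : Set (BRule R X)} (r : R) {a : BFree R X}
    (ha : ReductionFinite S a) : ReductionFinite S (r • a) := by
  intro seq hseq
  obtain ⟨N, hN⟩ := ha seq hseq
  refine ⟨N, fun n hn => ?_⟩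
  rw [ActsTrivially, applySeq_smul]
  show r * (applySeq seq a n).coeff _ = 0
  rw [hN n hn, mul_zero]

lemma reductionFinite_opsmul {S : Set (BRule R X)} (r : R) {a : BFree R X}
    (ha : ReductionFinite S a) : ReductionFinite S (MulOpposite.op r • a) := by
  intro seq hseq
  obtain ⟨N, hN⟩ := ha seq hseq
  refine ⟨N, fun n hn => ?_⟩
  rw [ActsTrivially, applySeq_opsmul]
  show (applySeq seq a n).coeff _ * r = 0
  rw [hN n hn, zero_mul]

lemma reductionFinite_step {S : Set (BRule R X)} {a : BFree R X}
    (ha : ReductionFinite S a) {s : BStep R X} (hs : s.1 ∈ S) :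
    ReductionFinite S (applyStep s a) := by
  intro seq hseq
  set seq' : ℕ → BStep R X := fun n => Nat.rec s (fun k _ => seq k) n with hseq'
  have hmem : ∀ n, (seq' n).1 ∈ S := by
    intro n; cases n with
    | zero => exact hs
    | succ k => exact hseq k
  obtain ⟨N, hN⟩ := ha seq' hmem
  refine ⟨N, fun n hn => ?_⟩
  have key : ∀ m, applySeq seq (applyStep s a) m = applySeq seq' a (m + 1) := by
    intro m
    induction m with
    | zero => rfl
    | succ k ih => show applyStep _ _ = applyStep _ _; rw [ih]
  have := hN (n + 1) (by omega)
  rw [ActsTrivially, key]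
  exact this

lemma reductionFinite_list {S : Set (BRule R X)} {a : BFree R X}
    (ha : ReductionFinite S a) {L : List (BStep R X)} (hL : ∀ s ∈ L, s.1 ∈ S) :
    ReductionFinite S (applyList L a) := by
  induction L generalizing a with
  | nil => exact ha
  | cons s L ih =>
      rw [applyList_cons]
      exact ih (reductionFinite_step ha (hL s (by simp))) fun t ht => hL t (by simp [ht])

end helpers4

section exist
variable {R X : Type} [Ring R]

lemma applyList_range_map (seq : ℕ → BStep R X) (a : BFree R X) (n : ℕ) :
    applyList ((List.range n).map seq) a = applySeq seq a n := by
  induction n with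
  | zero => rfl
  | succ n ih =>
      rw [List.range_succ, List.map_append, applyList_append, ih]
      rfl

lemma exists_finalOn {S : Set (BRule R X)} {a : BFree R X}
    (ha : ReductionFinite S a) : ∃ L, FinalOn S L a := by
  classical
  by_cases hS : ∃ σ₀, σ₀ ∈ S
  · obtain ⟨σ₀, hσ₀⟩ := hS
    have choice : ∀ b : BFree R X, ∃ s : BStep R X,
        s.1 ∈ S ∧ (¬ BIrreducible S b → ¬ ActsTrivially s b) := by
      intro b
      by_cases hb : BIrreducible S b
      · exact ⟨(σ₀, [], []), hσ₀, fun h => absurd hb h⟩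
      · have hb' := hb
        rw [BIrreducible] at hb'
        push_neg at hb'
        obtain ⟨σ, hσS, A, B, hne⟩ := hb'
        exact ⟨(σ, A, B), hσS, fun _ => hne⟩
    choose next hnextS hnext using choice
    set bfun : ℕ → BFree R X :=
      fun n => Nat.rec a (fun _ c => applyStep (next c) c) n with hbfun
    set seq : ℕ → BStep R X := fun n => next (bfun n) with hseq
    have horbit : ∀ n, applySeq seq a n = bfun n := by
      intro n
      induction n with
      | zero => rfl
      | succ n ih => show applyStep (seq n) (applySeq seq a n) = _; rw [ih]
    obtain ⟨N, hN⟩ := ha seq fun n => hnextS (bfun n)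
    have htriv := hN N le_rfl
    rw [horbit] at htriv
    have hirr : BIrreducible S (bfun N) := by
      by_contra h
      exact hnext (bfun N) h htriv
    refine ⟨(List.range N).map seq, ?_, ?_⟩
    · intro s hs
      obtain ⟨i, _, rfl⟩ := List.mem_map.mp hs
      exact hnextS _
    · rw [applyList_range_map, horbit]
      exact hirr
  · refine ⟨[], fun s hs => (List.not_mem_nil hs).elim, ?_⟩
    intro σ hσ
    exact absurd ⟨σ, hσ⟩ hS

end exist

section key
variable {R X : Type} [Ring R] {S : Set (BRule R X)}

lemma steps_append {L L' : List (BStep R X)} (h : ∀ s ∈ L, s.1 ∈ S)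
    (h' : ∀ s ∈ L', s.1 ∈ S) : ∀ s ∈ L ++ L', s.1 ∈ S := by
  intro s hs
  rcases List.mem_append.mp hs with h1 | h1
  · exact h s h1
  · exact h' s h1

lemma key_add {a b : BFree R X} (hua : ReductionUnique S a) (hub : ReductionUnique S b)
    {L La Lb : List (BStep R X)} (hL : FinalOn S L (a + b)) (hLa : FinalOn S La a)
    (hLb : FinalOn S Lb b) :
    applyList L (a + b) = applyList La a + applyList Lb b := by
  obtain ⟨L₁, hL₁⟩ := exists_finalOn (reductionFinite_list hua.1 hL.1)
  obtain ⟨L₂, hL₂⟩ := exists_finalOn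
    (reductionFinite_list hub.1 (steps_append hL.1 hL₁.1))
  have hM : ∀ s ∈ L ++ L₁ ++ L₂, s.1 ∈ S :=
    steps_append (steps_append hL.1 hL₁.1) hL₂.1
  have hMa : FinalOn S (L ++ L₁ ++ L₂) a := by
    refine ⟨hM, ?_⟩
    rw [applyList_append, applyList_append,
      applyList_of_irreducible hL₁.2 hL₂.1]
    exact hL₁.2
  have hMb : FinalOn S (L ++ L₁ ++ L₂) b := by
    refine ⟨hM, ?_⟩
    rw [applyList_append]
    exact hL₂.2
  have hfix : applyList (L ++ L₁ ++ L₂) (a + b) = applyList L (a + b) := by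
    rw [applyList_append, applyList_append,
      applyList_of_irreducible hL.2 hL₁.1,
      applyList_of_irreducible hL.2 hL₂.1]
  calc applyList L (a + b) = applyList (L ++ L₁ ++ L₂) (a + b) := hfix.symm
    _ = applyList (L ++ L₁ ++ L₂) a + applyList (L ++ L₁ ++ L₂) b := applyList_add _ _ _
    _ = applyList La a + applyList Lb b := by
        rw [hua.2 _ La hMa hLa, hub.2 _ Lb hMb hLb]

lemma key_smul (r : R) {a : BFree R X} (hua : ReductionUnique S a)
    {L La : List (BStep R X)} (hL : FinalOn S L (r • a)) (hLa : FinalOn S La a) :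
    applyList L (r • a) = r • applyList La a := by
  obtain ⟨L₁, hL₁⟩ := exists_finalOn (reductionFinite_list hua.1 hL.1)
  have hM : ∀ s ∈ L ++ L₁, s.1 ∈ S := steps_append hL.1 hL₁.1
  have hMa : FinalOn S (L ++ L₁) a := ⟨hM, by rw [applyList_append]; exact hL₁.2⟩
  have hfix : applyList (L ++ L₁) (r • a) = applyList L (r • a) := by
    rw [applyList_append, applyList_of_irreducible hL.2 hL₁.1]
  calc applyList L (r • a) = applyList (L ++ L₁) (r • a) := hfix.symm
    _ = r • applyList (L ++ L₁) a := applyList_smul _ _ _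
    _ = r • applyList La a := by rw [hua.2 _ La hMa hLa]

lemma key_opsmul (r : R) {a : BFree R X} (hua : ReductionUnique S a)
    {L La : List (BStep R X)} (hL : FinalOn S L (MulOpposite.op r • a))
    (hLa : FinalOn S La a) :
    applyList L (MulOpposite.op r • a) = MulOpposite.op r • applyList La a := by
  obtain ⟨L₁, hL₁⟩ := exists_finalOn (reductionFinite_list hua.1 hL.1)
  have hM : ∀ s ∈ L ++ L₁, s.1 ∈ S := steps_append hL.1 hL₁.1
  have hMa : FinalOn S (L ++ L₁) a := ⟨hM, by rw [applyList_append]; exact hL₁.2⟩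
  have hfix : applyList (L ++ L₁) (MulOpposite.op r • a)
      = applyList L (MulOpposite.op r • a) := by
    rw [applyList_append, applyList_of_irreducible hL.2 hL₁.1]
  calc applyList L (MulOpposite.op r • a)
      = applyList (L ++ L₁) (MulOpposite.op r • a) := hfix.symm
    _ = MulOpposite.op r • applyList (L ++ L₁) a := applyList_opsmul _ _ _
    _ = MulOpposite.op r • applyList La a := by rw [hua.2 _ La hMa hLa]

lemma reductionUnique_zero (S : Set (BRule R X)) :
    ReductionUnique S (0 : BFree R X) := by
  refine ⟨reductionFinite_zero S, fun L L' _ _ => ?_⟩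
  rw [applyList_zero, applyList_zero]

lemma reductionUnique_add {a b : BFree R X} (hua : ReductionUnique S a)
    (hub : ReductionUnique S b) : ReductionUnique S (a + b) := by
  refine ⟨reductionFinite_add hua.1 hub.1, fun L L' hL hL' => ?_⟩
  obtain ⟨La, hLa⟩ := exists_finalOn hua.1
  obtain ⟨Lb, hLb⟩ := exists_finalOn hub.1
  rw [key_add hua hub hL hLa hLb, key_add hua hub hL' hLa hLb]

lemma reductionUnique_smul (r : R) {a : BFree R X} (hua : ReductionUnique S a) :
    ReductionUnique S (r • a) := by
  refine ⟨reductionFinite_smul r hua.1, fun L L' hL hL' => ?_⟩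
  obtain ⟨La, hLa⟩ := exists_finalOn hua.1
  rw [key_smul r hua hL hLa, key_smul r hua hL' hLa]

lemma reductionUnique_opsmul (r : R) {a : BFree R X} (hua : ReductionUnique S a) :
    ReductionUnique S (MulOpposite.op r • a) := by
  refine ⟨reductionFinite_opsmul r hua.1, fun L L' hL hL' => ?_⟩
  obtain ⟨La, hLa⟩ := exists_finalOn hua.1
  rw [key_opsmul r hua hL hLa, key_opsmul r hua hL' hLa]

end key

open Classical in
noncomputable def rSdef {R X : Type} [Ring R] (S : Set (BRule R X)) (a : BFree R X) :
    BFree R X :=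
  if h : ∃ L, FinalOn S L a then applyList (Classical.choose h) a else 0

lemma rSdef_eq {R X : Type} [Ring R] {S : Set (BRule R X)} {a : BFree R X}
    (ha : ReductionUnique S a) {L : List (BStep R X)} (hL : FinalOn S L a) :
    applyList L a = rSdef S a := by
  classical
  have hex : ∃ L, FinalOn S L a := ⟨L, hL⟩
  rw [rSdef, dif_pos hex]
  exact ha.2 L _ hL (Classical.choose_spec hex)

/-- The set of reduction-unique elements of `R⟨X⟩` forms an
`R`-subbimodule, and the map `r_S`, assigning to each reduction-unique element its common
image under all final sequences of reductions, is an `R`-bimodule homomorphism into the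
module of irreducible elements. -/
theorem reductionUnique_subbimodule_and_rS (R X : Type) [Ring R] (S : Set (BRule R X)) :
    (ReductionUnique S (0 : BFree R X) ∧
      (∀ a b : BFree R X, ReductionUnique S a → ReductionUnique S b →
        ReductionUnique S (a + b)) ∧
      (∀ (r : R) (a : BFree R X), ReductionUnique S a → ReductionUnique S (r • a)) ∧
      (∀ (r : R) (a : BFree R X), ReductionUnique S a →
        ReductionUnique S (MulOpposite.op r • a))) ∧
    ∃ rS : BFree R X → BFree R X,
      (∀ a : BFree R X, ReductionUnique S a →
        ∀ L : List (BStep R X), FinalOn S L a → applyList L a = rS a) ∧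
      (∀ a : BFree R X, ReductionUnique S a → BIrreducible S (rS a)) ∧
      (∀ a b : BFree R X, ReductionUnique S a → ReductionUnique S b →
        rS (a + b) = rS a + rS b) ∧
      (∀ (r : R) (a : BFree R X), ReductionUnique S a → rS (r • a) = r • rS a) ∧
      (∀ (r : R) (a : BFree R X), ReductionUnique S a →
        rS (MulOpposite.op r • a) = MulOpposite.op r • rS a) := by
  refine ⟨⟨reductionUnique_zero S, fun a b ha hb => reductionUnique_add ha hb,
    fun r a ha => reductionUnique_smul r ha,
    fun r a ha => reductionUnique_opsmul r ha⟩, rSdef S,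
    fun a ha L hL => rSdef_eq ha hL, ?_, ?_, ?_, ?_⟩
  · intro a ha
    obtain ⟨L, hL⟩ := exists_finalOn ha.1
    rw [← rSdef_eq ha hL]
    exact hL.2
  · intro a b ha hb
    obtain ⟨La, hLa⟩ := exists_finalOn ha.1
    obtain ⟨Lb, hLb⟩ := exists_finalOn hb.1
    obtain ⟨L, hL⟩ := exists_finalOn (reductionFinite_add ha.1 hb.1)
    rw [← rSdef_eq (reductionUnique_add ha hb) hL, ← rSdef_eq ha hLa,
      ← rSdef_eq hb hLb]
    exact key_add ha hb hL hLa hLb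
  · intro r a ha
    obtain ⟨La, hLa⟩ := exists_finalOn ha.1
    obtain ⟨L, hL⟩ := exists_finalOn (reductionFinite_smul r ha.1)
    rw [← rSdef_eq (reductionUnique_smul r ha) hL, ← rSdef_eq ha hLa]
    exact key_smul r ha hL hLa
  · intro r a ha
    obtain ⟨La, hLa⟩ := exists_finalOn ha.1
    obtain ⟨L, hL⟩ := exists_finalOn (reductionFinite_opsmul r ha.1)
    rw [← rSdef_eq (reductionUnique_opsmul r ha) hL, ← rSdef_eq ha hLa]
    exact key_opsmul r ha hL hLa
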